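/- For nonnegative reals a_k and bounded operators b_k, c_k on a Hilbert space H (finite index set), one has ‖∑_k a_k c_k* b_k‖ ≤ ‖∑_k a_k c_k* c_k‖^{1/2} · ‖∑_k a_k b_k* b_k‖^{1/2}. -/

import Mathlib

open ContinuousLinearMap RCLike

theorem cauchy_schwarz_operator {H : Type*} [NormedAddCommGroup H]
    [InnerProductSpace ℂ H] [CompleteSpace H]
    {ι : Type*} (s : Finset ι) (a : ι → ℝ) (ha : ∀ k, 0 ≤ a k)
    (b c : ι → H →L[ℂ] H) :
    ‖∑ k ∈ s, a k • (ContinuousLinearMap.adjoint (c k) ∘L b k)‖ ≤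
      Real.sqrt ‖∑ k ∈ s, a k • (ContinuousLinearMap.adjoint (c k) ∘L c k)‖ *
      Real.sqrt ‖∑ k ∈ s, a k • (ContinuousLinearMap.adjoint (b k) ∘L b k)‖ := by
  set T := ∑ k ∈ s, a k • (ContinuousLinearMap.adjoint (c k) ∘L b k) with hT
  set Sc := ∑ k ∈ s, a k • (ContinuousLinearMap.adjoint (c k) ∘L c k) with hSc
  set Sb := ∑ k ∈ s, a k • (ContinuousLinearMap.adjoint (b k) ∘L b k) with hSb
  have smul_inner : ∀ (k : ι) (u v : H),
      (inner ℂ u ((a k : ℝ) • v) : ℂ) = (a k : ℝ) • (inner ℂ u v : ℂ) := by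
    intro k u v
    rw [real_smul_eq_coe_smul (K := ℂ), inner_smul_right]
    simp [real_smul_eq_coe_smul (K := ℂ)]
  have quad : ∀ (d : ι → H →L[ℂ] H) (x : H),
      re (inner ℂ x ((∑ k ∈ s, a k • (ContinuousLinearMap.adjoint (d k) ∘L d k)) x) : ℂ)
        = ∑ k ∈ s, a k * ‖d k x‖ ^ 2 := by
    intro d x
    rw [ContinuousLinearMap.sum_apply, inner_sum, map_sum]
    refine Finset.sum_congr rfl fun k _ => ?_
    rw [ContinuousLinearMap.smul_apply, ContinuousLinearMap.comp_apply,
      smul_inner, ContinuousLinearMap.adjoint_inner_right, smul_re,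
      inner_self_eq_norm_sq]
  have quadle : ∀ (d : ι → H →L[ℂ] H) (x : H),
      ∑ k ∈ s, a k * ‖d k x‖ ^ 2 ≤
        ‖∑ k ∈ s, a k • (ContinuousLinearMap.adjoint (d k) ∘L d k)‖ * ‖x‖ ^ 2 := by
    intro d x
    rw [← quad]
    calc re (inner ℂ x ((∑ k ∈ s, a k • (ContinuousLinearMap.adjoint (d k) ∘L d k)) x) : ℂ)
        ≤ ‖(inner ℂ x ((∑ k ∈ s, a k • (ContinuousLinearMap.adjoint (d k) ∘L d k)) x) : ℂ)‖ :=
          re_le_norm _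
      _ ≤ ‖x‖ * ‖(∑ k ∈ s, a k • (ContinuousLinearMap.adjoint (d k) ∘L d k)) x‖ :=
          norm_inner_le_norm _ _
      _ ≤ ‖x‖ * (‖∑ k ∈ s, a k • (ContinuousLinearMap.adjoint (d k) ∘L d k)‖ * ‖x‖) := by
          gcongr; exact le_opNorm _ _
      _ = _ := by ring
  refine opNorm_le_bound _ (by positivity) fun x => ?_
  rcases eq_or_lt_of_le (norm_nonneg (T x)) with h0 | h0
  · rw [← h0]; positivity
  have key : ‖T x‖ ^ 2 ≤ Real.sqrt ‖Sc‖ * Real.sqrt ‖Sb‖ * ‖x‖ * ‖T x‖ := by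
    have h1 : (‖T x‖ : ℝ) ^ 2 = re (inner ℂ (T x) (T x) : ℂ) :=
      (inner_self_eq_norm_sq (T x)).symm
    rw [h1]
    have h2 : re (inner ℂ (T x) (T x) : ℂ)
        = ∑ k ∈ s, a k * re (inner ℂ (c k (T x)) (b k x) : ℂ) := by
      conv_lhs => rw [hT]
      rw [ContinuousLinearMap.sum_apply, inner_sum, map_sum]
      refine Finset.sum_congr rfl fun k _ => ?_
      rw [ContinuousLinearMap.smul_apply, ContinuousLinearMap.comp_apply,
        smul_inner, ContinuousLinearMap.adjoint_inner_right, smul_re]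
    rw [h2]
    calc ∑ k ∈ s, a k * re (inner ℂ (c k (T x)) (b k x) : ℂ)
        ≤ ∑ k ∈ s, Real.sqrt (a k * ‖c k (T x)‖ ^ 2) * Real.sqrt (a k * ‖b k x‖ ^ 2) := by
          refine Finset.sum_le_sum fun k _ => ?_
          rw [Real.sqrt_mul (ha k), Real.sqrt_mul (ha k), Real.sqrt_sq (norm_nonneg _),
            Real.sqrt_sq (norm_nonneg _)]
          have : a k * re (inner ℂ (c k (T x)) (b k x) : ℂ)
              ≤ a k * (‖c k (T x)‖ * ‖b k x‖) :=
            mul_le_mul_of_nonneg_left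
              ((re_le_norm _).trans (norm_inner_le_norm _ _)) (ha k)
          refine this.trans_eq ?_
          conv_lhs => rw [← Real.mul_self_sqrt (ha k)]
          ring
      _ ≤ Real.sqrt (∑ k ∈ s, a k * ‖c k (T x)‖ ^ 2) *
            Real.sqrt (∑ k ∈ s, a k * ‖b k x‖ ^ 2) :=
          Real.sum_sqrt_mul_sqrt_le s (fun k => mul_nonneg (ha k) (by positivity))
            (fun k => mul_nonneg (ha k) (by positivity))
      _ ≤ Real.sqrt (‖Sc‖ * ‖T x‖ ^ 2) * Real.sqrt (‖Sb‖ * ‖x‖ ^ 2) := by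
          gcongr
          · exact quadle c (T x)
          · exact quadle b x
      _ = Real.sqrt ‖Sc‖ * Real.sqrt ‖Sb‖ * ‖x‖ * ‖T x‖ := by
          rw [Real.sqrt_mul (norm_nonneg _), Real.sqrt_mul (norm_nonneg _),
            Real.sqrt_sq (norm_nonneg _), Real.sqrt_sq (norm_nonneg _)]
          ring
  nlinarith [key, h0]
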